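/- Let q ∈ (1,2], s₀ > 0, M > 0 and set τ_max = (M+1)s₀. Let E : [0,∞) → ℝ be such that s̃ ↦ E(s̃^{q/2}) is concave in s̃ = s^{2/q} on the relevant domain, and suppose s₀ minimizes s ↦ s² - E(s). Then for all s with s₀ < s ≤ τ_max, [s² - E(s)] - [s₀² - E(s₀)] ≥ (2(q-1)/q) (M+1)^{-2(2-q)/q} (s - s₀)². -/

import Mathlib

open Real Set



lemma aux_strong_convex (q u : ℝ) (hq : 1 < q) (hq2 : q ≤ 2) (hu : 0 < u) :
    ConvexOn ℝ (Set.Icc (0:ℝ) u)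
      (fun x => x ^ q - q * (q - 1) / 2 * u ^ (q - 2) * x ^ 2) := by
  have hq0 : (0:ℝ) < q := by linarith
  apply convexOn_of_hasDerivWithinAt2_nonneg (f' := fun x => q * x ^ (q - 1) -
      q * (q - 1) * u ^ (q - 2) * x)
    (f'' := fun x => q * (q - 1) * x ^ (q - 2) - q * (q - 1) * u ^ (q - 2))
    (convex_Icc 0 u)
  · apply ContinuousOn.sub
    · exact fun x hx => (Real.continuousAt_rpow_const x q (Or.inr hq0.le)).continuousWithinAt
    · fun_prop
  · intro x hx
    rw [interior_Icc] at hx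
    have h1 : HasDerivAt (fun x : ℝ => x ^ q) (q * x ^ (q - 1)) x :=
      Real.hasDerivAt_rpow_const (Or.inl (ne_of_gt hx.1))
    have h2 : HasDerivAt (fun x : ℝ => q * (q - 1) / 2 * u ^ (q - 2) * x ^ 2)
        (q * (q - 1) * u ^ (q - 2) * x) x := by
      have := ((hasDerivAt_pow 2 x).const_mul (q * (q - 1) / 2 * u ^ (q - 2)))
      refine this.congr_deriv ?_
      ring
    exact (h1.sub h2).hasDerivWithinAt
  · intro x hx
    rw [interior_Icc] at hx
    have h1 : HasDerivAt (fun x : ℝ => q * x ^ (q - 1)) (q * ((q - 1) * x ^ (q - 1 - 1))) x :=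
      (Real.hasDerivAt_rpow_const (Or.inl (ne_of_gt hx.1))).const_mul q
    have h2 : HasDerivAt (fun x : ℝ => q * (q - 1) * u ^ (q - 2) * x)
        (q * (q - 1) * u ^ (q - 2)) x := by
      simpa using (hasDerivAt_id x).const_mul (q * (q - 1) * u ^ (q - 2))
    have := (h1.sub h2).hasDerivWithinAt (s := interior (Icc (0:ℝ) u))
    refine this.congr_deriv ?_
    rw [show q - 1 - 1 = q - 2 by ring]
    ring
  · intro x hx
    rw [interior_Icc] at hx
    have : u ^ (q - 2) ≤ x ^ (q - 2) :=
      Real.rpow_le_rpow_of_nonpos hx.1 hx.2.le (by linarith)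
    have hqq : 0 < q * (q - 1) := by nlinarith
    nlinarith [mul_le_mul_of_nonneg_left this hqq.le]

lemma aux_tangent (a s₀ s : ℝ) (ha : 1 ≤ a) (hs₀ : 0 < s₀) (hs : s₀ < s) :
    s₀ ^ a + a * s₀ ^ (a - 1) * (s - s₀) ≤ s ^ a := by
  have hs' : 0 < s := hs₀.trans hs
  have key := one_add_mul_self_le_rpow_one_add
    (s := s / s₀ - 1) (by have : 0 < s / s₀ := div_pos hs' hs₀; linarith) ha
  rw [show (1 : ℝ) + (s / s₀ - 1) = s / s₀ by ring] at key
  have hdiv : (s / s₀) ^ a = s ^ a / s₀ ^ a := Real.div_rpow hs'.le hs₀.le a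
  have hpos : (0:ℝ) < s₀ ^ a := Real.rpow_pos_of_pos hs₀ a
  have hsub : s₀ ^ (a - 1) = s₀ ^ a / s₀ := by
    rw [Real.rpow_sub hs₀, Real.rpow_one]
  have := mul_le_mul_of_nonneg_right key hpos.le
  rw [hdiv, div_mul_cancel₀ _ (ne_of_gt hpos)] at this
  calc s₀ ^ a + a * s₀ ^ (a - 1) * (s - s₀)
      = (1 + a * (s / s₀ - 1)) * s₀ ^ a := by
        rw [hsub]; field_simp
    _ ≤ s ^ a := this

lemma aux_combine (t u₀ u C Uq U₀q Es Es₀ Est P : ℝ) (ht : 0 < t)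
    (hA : (1 - t) * Es₀ + t * Es ≤ Est)
    (hB : U₀q - Es₀ ≤ P - Est)
    (hC : P - C * ((1 - t) * u₀ + t * u) ^ 2
        ≤ (1 - t) * (U₀q - C * u₀ ^ 2) + t * (Uq - C * u ^ 2)) :
    C * (1 - t) * (u - u₀) ^ 2 ≤ (Uq - Es) - (U₀q - Es₀) := by
  have h5 : t * (Es - Es₀) ≤ t * ((Uq - U₀q) - C * (1 - t) * (u - u₀) ^ 2) := by
    nlinarith
  have h6 := le_of_mul_le_mul_left h5 ht
  linarith

/-- right-sided second-order quadratic margin under concavity of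
s̃ ↦ E(s̃^{q/2}). -/
theorem stmt_6 (q s₀ M : ℝ) (hq : 1 < q) (hq2 : q ≤ 2) (hs₀ : 0 < s₀) (hM : 0 < M)
    (E : ℝ → ℝ)
    (hconc : ConcaveOn ℝ (Set.Ici (0:ℝ)) (fun s' : ℝ => E (s' ^ (q / 2))))
    (hmin : ∀ s : ℝ, 0 ≤ s → s₀ ^ 2 - E s₀ ≤ s ^ 2 - E s) :
    ∀ s : ℝ, s₀ < s → s ≤ (M + 1) * s₀ →
      (2 * (q - 1) / q) * (M + 1) ^ (-(2 * (2 - q) / q)) * (s - s₀) ^ 2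
        ≤ (s ^ 2 - E s) - (s₀ ^ 2 - E s₀) := by
  intro s hss hsM
  have hq0 : (0:ℝ) < q := by linarith
  have hqne : q ≠ 0 := ne_of_gt hq0
  have hs' : (0:ℝ) < s := hs₀.trans hss
  have ha : 1 ≤ 2 / q := by rw [le_div_iff₀ hq0]; linarith
  have hu₀pos : 0 < s₀ ^ (2/q) := Real.rpow_pos_of_pos hs₀ _
  have hupos : 0 < s ^ (2/q) := Real.rpow_pos_of_pos hs' _
  have hu₀u : s₀ ^ (2/q) < s ^ (2/q) := Real.rpow_lt_rpow hs₀.le hss (by positivity)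
  have haq : 2 / q * (q / 2) = 1 := by field_simp
  have hback₀ : (s₀ ^ (2/q)) ^ (q / 2) = s₀ := by
    rw [← Real.rpow_mul hs₀.le, haq, Real.rpow_one]
  have hback : (s ^ (2/q)) ^ (q / 2) = s := by
    rw [← Real.rpow_mul hs'.le, haq, Real.rpow_one]
  have hsq : s ^ 2 = (s ^ (2/q)) ^ q := by
    rw [← Real.rpow_mul hs'.le, show 2 / q * q = 2 by field_simp,
      show (2:ℝ) = ((2:ℕ):ℝ) by norm_num, Real.rpow_natCast]
  have hsq₀ : s₀ ^ 2 = (s₀ ^ (2/q)) ^ q := by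
    rw [← Real.rpow_mul hs₀.le, show 2 / q * q = 2 by field_simp,
      show (2:ℝ) = ((2:ℕ):ℝ) by norm_num, Real.rpow_natCast]
  have hcpos : 0 < q * (q - 1) / 2 * (s ^ (2/q)) ^ (q - 2) :=
    mul_pos (by nlinarith) (Real.rpow_pos_of_pos hupos _)
  -- key inequality for each t
  have key : ∀ t ∈ Set.Ioo (0:ℝ) 1,
      q * (q - 1) / 2 * (s ^ (2/q)) ^ (q - 2) * (1 - t) * (s ^ (2/q) - s₀ ^ (2/q)) ^ 2
        ≤ (s ^ 2 - E s) - (s₀ ^ 2 - E s₀) := by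
    intro t ht
    have hutpos : 0 < (1 - t) * s₀ ^ (2/q) + t * s ^ (2/q) := by
      nlinarith [ht.1, ht.2, hu₀pos, hupos]
    -- concavity
    have hA := hconc.2 (Set.mem_Ici.mpr hu₀pos.le) (Set.mem_Ici.mpr hupos.le)
      (by linarith [ht.2] : (0:ℝ) ≤ 1 - t) (le_of_lt ht.1) (by ring)
    simp only [smul_eq_mul] at hA
    rw [hback₀, hback] at hA
    -- minimality at the intermediate point
    have hB := hmin (((1 - t) * s₀ ^ (2/q) + t * s ^ (2/q)) ^ (q / 2))
      (Real.rpow_nonneg hutpos.le _)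
    have hutq : ((((1 - t) * s₀ ^ (2/q) + t * s ^ (2/q)) ^ (q / 2))) ^ 2
        = ((1 - t) * s₀ ^ (2/q) + t * s ^ (2/q)) ^ q := by
      rw [← Real.rpow_natCast (((1 - t) * s₀ ^ (2/q) + t * s ^ (2/q)) ^ (q/2)) 2,
        ← Real.rpow_mul hutpos.le]
      norm_num
    rw [hutq, hsq₀] at hB
    -- strong convexity of x ↦ x^q - c x²
    have hC := (aux_strong_convex q (s ^ (2/q)) hq hq2 hupos).2
      (Set.mem_Icc.mpr ⟨hu₀pos.le, hu₀u.le⟩) (Set.mem_Icc.mpr ⟨hupos.le, le_refl _⟩)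
      (by linarith [ht.2] : (0:ℝ) ≤ 1 - t) (le_of_lt ht.1) (by ring)
    simp only [smul_eq_mul] at hC
    rw [hsq, hsq₀]
    exact aux_combine t (s₀ ^ (2/q)) (s ^ (2/q)) (q * (q - 1) / 2 * (s ^ (2/q)) ^ (q - 2))
      ((s ^ (2/q)) ^ q) ((s₀ ^ (2/q)) ^ q) (E s) (E s₀)
      (E (((1 - t) * s₀ ^ (2/q) + t * s ^ (2/q)) ^ (q / 2)))
      (((1 - t) * s₀ ^ (2/q) + t * s ^ (2/q)) ^ q) ht.1 hA hB hC
  -- pass to the limit t → 0⁺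
  have hlim : q * (q - 1) / 2 * (s ^ (2/q)) ^ (q - 2) * (s ^ (2/q) - s₀ ^ (2/q)) ^ 2
      ≤ (s ^ 2 - E s) - (s₀ ^ 2 - E s₀) := by
    have htend : Filter.Tendsto
        (fun t : ℝ => q * (q - 1) / 2 * (s ^ (2/q)) ^ (q - 2) * (1 - t)
          * (s ^ (2/q) - s₀ ^ (2/q)) ^ 2)
        (nhdsWithin 0 (Set.Ioi 0))
        (nhds (q * (q - 1) / 2 * (s ^ (2/q)) ^ (q - 2) * (1 - (0:ℝ))
          * (s ^ (2/q) - s₀ ^ (2/q)) ^ 2)) := by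
      apply Filter.Tendsto.mono_left _ nhdsWithin_le_nhds
      exact Continuous.tendsto (by continuity) 0
    have := le_of_tendsto htend (Filter.eventually_of_mem
      (Ioo_mem_nhdsGT_of_mem (Set.mem_Ico.mpr ⟨le_refl 0, zero_lt_one⟩))
      (fun t ht => key t ht))
    simpa using this
  -- final numeric estimate
  have hβ0 : 0 ≤ 2 * (2 - q) / q := by
    apply div_nonneg _ hq0.le; linarith
  have hd : 0 < s - s₀ := by linarith
  have htan : s₀ ^ (2/q) + 2/q * s₀ ^ (2/q - 1) * (s - s₀) ≤ s ^ (2/q) :=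
    aux_tangent (2/q) s₀ s ha hs₀ hss
  have hstep : 2/q * s₀ ^ (2/q - 1) * (s - s₀) ≤ s ^ (2/q) - s₀ ^ (2/q) := by linarith
  have hstep_pos : 0 < 2/q * s₀ ^ (2/q - 1) * (s - s₀) := by
    have := Real.rpow_pos_of_pos hs₀ (2/q - 1); positivity
  have hsq2 : (s₀ ^ (2/q - 1)) ^ 2 = s₀ ^ (2 * (2 - q) / q) := by
    rw [← Real.rpow_natCast (s₀ ^ (2/q - 1)) 2, ← Real.rpow_mul hs₀.le]
    congr 1; push_cast; field_simp
  have huq2 : (s ^ (2/q)) ^ (q - 2) = s ^ (-(2 * (2 - q) / q)) := by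
    rw [← Real.rpow_mul hs'.le]
    congr 1; field_simp; ring
  have hratio : (M + 1) ^ (-(2 * (2 - q) / q))
      ≤ s ^ (-(2 * (2 - q) / q)) * s₀ ^ (2 * (2 - q) / q) := by
    have h1 : s / s₀ ≤ M + 1 := by rw [div_le_iff₀ hs₀]; linarith
    have h2 : (M + 1) ^ (-(2 * (2 - q) / q)) ≤ (s / s₀) ^ (-(2 * (2 - q) / q)) :=
      Real.rpow_le_rpow_of_nonpos (div_pos hs' hs₀) h1 (by linarith)
    have h3 : (s / s₀) ^ (-(2 * (2 - q) / q))
        = s ^ (-(2 * (2 - q) / q)) * s₀ ^ (2 * (2 - q) / q) := by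
      rw [Real.div_rpow hs'.le hs₀.le, Real.rpow_neg hs₀.le]
      field_simp
    linarith [h2, h3.symm.le]
  have hm1 : q * (q - 1) / 2 * (s ^ (2/q)) ^ (q - 2)
        * (2/q * s₀ ^ (2/q - 1) * (s - s₀)) ^ 2
      ≤ q * (q - 1) / 2 * (s ^ (2/q)) ^ (q - 2) * (s ^ (2/q) - s₀ ^ (2/q)) ^ 2 := by
    apply mul_le_mul_of_nonneg_left _ hcpos.le
    exact pow_le_pow_left₀ hstep_pos.le hstep 2
  have hm2 : q * (q - 1) / 2 * (s ^ (2/q)) ^ (q - 2)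
        * (2/q * s₀ ^ (2/q - 1) * (s - s₀)) ^ 2
      = (2 * (q - 1) / q) * (s ^ (-(2 * (2 - q) / q)) * s₀ ^ (2 * (2 - q) / q))
        * (s - s₀) ^ 2 := by
    rw [huq2, mul_pow, mul_pow, hsq2]
    field_simp
  have hm3 : (2 * (q - 1) / q) * (M + 1) ^ (-(2 * (2 - q) / q)) * (s - s₀) ^ 2
      ≤ (2 * (q - 1) / q) * (s ^ (-(2 * (2 - q) / q)) * s₀ ^ (2 * (2 - q) / q))
        * (s - s₀) ^ 2 := by
    apply mul_le_mul_of_nonneg_right _ (by positivity)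
    apply mul_le_mul_of_nonneg_left hratio (by apply div_nonneg <;> linarith)
  linarith
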